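/- For every real ι > 0 such that ι/β is not an integer, w is differentiable at ι with derivative w'(ι) = exp(−αι) · ∑_{i=0}^{⌊ι/β⌋} (γ(ι − iβ))^i / i! · exp(−γ(ι − iβ)). -/

import Mathlib

open Real Finset

/-- Normalized residual of the `i`-th Taylor approximation of the exponential:
`R_i(x) = (exp x − ∑_{j=0}^{i} x^j/j!) / exp x`. -/
noncomputable def Rres (i : ℕ) (x : ℝ) : ℝ :=
  (Real.exp x - ∑ j ∈ Finset.range (i + 1), x ^ j / (Nat.factorial j : ℝ)) / Real.exp x

/-- Expected cumulative freshness `w(ι) = ∑_{i=0}^{⌊ι/β⌋} (ν^i/(Δ+ν)^{i+1})·R_i((α+γ)(ι − iβ))`. -/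
noncomputable def wfun (α β γ ν Δ : ℝ) (ι : ℝ) : ℝ :=
  ∑ i ∈ Finset.range (⌊ι / β⌋₊ + 1),
    (ν ^ i / (Δ + ν) ^ (i + 1)) * Rres i ((α + γ) * (ι - (i : ℝ) * β))

lemma hasDerivAt_S (i : ℕ) (x : ℝ) :
    HasDerivAt (fun y : ℝ => ∑ j ∈ Finset.range (i + 1), y ^ j / (Nat.factorial j : ℝ))
      ((∑ j ∈ Finset.range (i + 1), x ^ j / (Nat.factorial j : ℝ)) -
        x ^ i / (Nat.factorial i : ℝ)) x := by
  induction i with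
  | zero => simpa using hasDerivAt_const x (1 : ℝ)
  | succ n ih =>
    have h1 : HasDerivAt (fun y : ℝ => y ^ (n + 1) / (Nat.factorial (n + 1) : ℝ))
        (x ^ n / (Nat.factorial n : ℝ)) x := by
      have h := (hasDerivAt_pow (n + 1) x).div_const (Nat.factorial (n + 1) : ℝ)
      refine h.congr_deriv ?_
      have hfac : (Nat.factorial n : ℝ) ≠ 0 := Nat.cast_ne_zero.2 n.factorial_ne_zero
      rw [Nat.add_sub_cancel, Nat.factorial_succ]
      push_cast
      field_simp
    have h2 := ih.add h1
    have hf : (fun y : ℝ => ∑ j ∈ Finset.range (n + 1 + 1), y ^ j / (Nat.factorial j : ℝ))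
        = fun y : ℝ => (∑ j ∈ Finset.range (n + 1), y ^ j / (Nat.factorial j : ℝ))
            + y ^ (n + 1) / (Nat.factorial (n + 1) : ℝ) := by
      funext y; rw [Finset.sum_range_succ]
    rw [hf, Finset.sum_range_succ]
    refine h2.congr_deriv ?_
    ring

lemma hasDerivAt_Rres (i : ℕ) (x : ℝ) :
    HasDerivAt (Rres i) (x ^ i / (Nat.factorial i : ℝ) * Real.exp (-x)) x := by
  have hR : Rres i = fun y : ℝ =>
      1 - (∑ j ∈ Finset.range (i + 1), y ^ j / (Nat.factorial j : ℝ)) * Real.exp (-y) := by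
    funext y
    unfold Rres
    rw [Real.exp_neg]
    field_simp
  rw [hR]
  have hE : HasDerivAt (fun y : ℝ => Real.exp (-y)) (-Real.exp (-x)) x := by
    exact ((Real.hasDerivAt_exp (-x)).comp x (hasDerivAt_neg x)).congr_deriv (by ring)
  have h := ((hasDerivAt_S i x).mul hE).const_sub 1
  refine h.congr_deriv ?_
  ring

/-- For every real `ι > 0` such that `ι/β` is not an integer, `w` is differentiable at `ι` with
derivative `w'(ι) = exp(−αι) · ∑_{i=0}^{⌊ι/β⌋} (γ(ι − iβ))^i / i! · exp(−γ(ι − iβ))`. -/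
theorem stmt_7 (α β γ ν Δ : ℝ) (hα : 0 < α) (hβ : 0 < β) (hγ : 0 < γ) (hν : 0 < ν)
    (hΔ : 0 < Δ) (hrates : α + γ = Δ + ν) (hnu : ν = γ * Real.exp (-(α * β)))
    (ι : ℝ) (hι : 0 < ι) (hnotint : ∀ k : ℤ, ι / β ≠ (k : ℝ)) :
    HasDerivAt (wfun α β γ ν Δ)
      (Real.exp (-(α * ι)) *
        ∑ i ∈ Finset.range (⌊ι / β⌋₊ + 1),
          (γ * (ι - (i : ℝ) * β)) ^ i / (Nat.factorial i : ℝ) *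
            Real.exp (-(γ * (ι - (i : ℝ) * β)))) ι := by
  have hAG : (0 : ℝ) < α + γ := by linarith
  set n := ⌊ι / β⌋₊ with hn
  -- strict bounds
  have hdivpos : 0 ≤ ι / β := le_of_lt (div_pos hι hβ)
  have hlow : (n : ℝ) < ι / β := by
    rcases lt_or_eq_of_le (Nat.floor_le hdivpos) with h | h
    · exact h
    · exact absurd h.symm (hnotint n)
  have hhigh : ι / β < (n : ℝ) + 1 := Nat.lt_floor_add_one _
  have h1 : (n : ℝ) * β < ι := by
    rw [← lt_div_iff₀ hβ]; exact hlow
  have h2 : ι < ((n : ℝ) + 1) * β := by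
    rw [← div_lt_iff₀ hβ]; exact hhigh
  -- the frozen sum
  set g : ℝ → ℝ := fun x => ∑ i ∈ Finset.range (n + 1),
    (ν ^ i / (Δ + ν) ^ (i + 1)) * Rres i ((α + γ) * (x - (i : ℝ) * β)) with hg
  have hEq : wfun α β γ ν Δ =ᶠ[nhds ι] g := by
    have hmem : Set.Ioo ((n : ℝ) * β) (((n : ℝ) + 1) * β) ∈ nhds ι := Ioo_mem_nhds h1 h2
    refine Filter.eventuallyEq_of_mem hmem fun x hx => ?_
    have hx0 : 0 ≤ x / β := by
      have : (0 : ℝ) ≤ (n : ℝ) * β := mul_nonneg (Nat.cast_nonneg n) hβ.le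
      exact le_of_lt (div_pos (lt_of_le_of_lt this hx.1) hβ)
    have hfl : ⌊x / β⌋₊ = n := by
      rw [Nat.floor_eq_iff hx0]
      constructor
      · exact le_of_lt ((lt_div_iff₀ hβ).2 hx.1)
      · exact (div_lt_iff₀ hβ).2 hx.2
    simp only [wfun, hfl, hg]
  -- derivative of g
  have hgderiv : HasDerivAt g
      (∑ i ∈ Finset.range (n + 1),
        (ν ^ i / (Δ + ν) ^ (i + 1)) *
          (((α + γ) * (ι - (i : ℝ) * β)) ^ i / (Nat.factorial i : ℝ) *
            Real.exp (-((α + γ) * (ι - (i : ℝ) * β))) * (α + γ))) ι := by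
    apply HasDerivAt.fun_sum
    intro i _
    have hinner : HasDerivAt (fun x : ℝ => (α + γ) * (x - (i : ℝ) * β)) (α + γ) ι := by
      simpa using ((hasDerivAt_id ι).sub_const ((i : ℝ) * β)).const_mul (α + γ)
    have := (hasDerivAt_Rres i ((α + γ) * (ι - (i : ℝ) * β))).comp ι hinner
    exact this.const_mul _
  have hval : (∑ i ∈ Finset.range (n + 1),
        (ν ^ i / (Δ + ν) ^ (i + 1)) *
          (((α + γ) * (ι - (i : ℝ) * β)) ^ i / (Nat.factorial i : ℝ) *
            Real.exp (-((α + γ) * (ι - (i : ℝ) * β))) * (α + γ)))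
      = Real.exp (-(α * ι)) *
        ∑ i ∈ Finset.range (n + 1),
          (γ * (ι - (i : ℝ) * β)) ^ i / (Nat.factorial i : ℝ) *
            Real.exp (-(γ * (ι - (i : ℝ) * β))) := by
    rw [Finset.mul_sum]
    refine Finset.sum_congr rfl fun i _ => ?_
    set t : ℝ := ι - (i : ℝ) * β with ht
    have key : Real.exp (-(α * β)) ^ i * Real.exp (-((α + γ) * t))
        = Real.exp (-(α * ι)) * Real.exp (-(γ * t)) := by
      rw [← Real.exp_nat_mul, ← Real.exp_add, ← Real.exp_add]
      congr 1
      rw [ht]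
      push_cast
      ring
    have hpow : ((α + γ) : ℝ) ^ (i + 1) ≠ 0 := pow_ne_zero _ (ne_of_gt hAG)
    have step : ν ^ i / (Δ + ν) ^ (i + 1) *
        (((α + γ) * t) ^ i / (Nat.factorial i : ℝ) * Real.exp (-((α + γ) * t)) * (α + γ))
        = (γ * t) ^ i / (Nat.factorial i : ℝ) *
            (Real.exp (-(α * β)) ^ i * Real.exp (-((α + γ) * t))) *
            ((α + γ) ^ (i + 1) / (α + γ) ^ (i + 1)) := by
      rw [← hrates, hnu, mul_pow, mul_pow, mul_pow]
      ring
    rw [step, key, div_self hpow, mul_one]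
    ring
  rw [← hval]
  exact hgderiv.congr_of_eventuallyEq hEq
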